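/- Let T > 0, γ > 0 and ζ ∈ ℝ. Define θ0(r) := (1 + ζ·exp(2γ(T−r)))/(1 − ζ·exp(2γ(T−r))) and Ψ0(t,s) := exp(−2γ(s−t))·((ζ·exp(2γT) − exp(2γs))/(ζ·exp(2γT) − exp(2γt)))². Fix t ≤ s ≤ T and assume ζ·exp(2γ(T−r)) ≠ 1 for every r ∈ [t,s]. Then exp(2γ·∫_t^s θ0(r) dr) = Ψ0(t,s). -/

import Mathlib

open Real Set MeasureTheory

theorem stmt_2 (T γ ζ : ℝ) (hT : 0 < T) (hγ : 0 < γ)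
    (θ0 : ℝ → ℝ)
    (hθ0 : ∀ r, θ0 r = (1 + ζ * Real.exp (2 * γ * (T - r))) /
                       (1 - ζ * Real.exp (2 * γ * (T - r))))
    (Ψ0 : ℝ → ℝ → ℝ)
    (hΨ0 : ∀ t s, Ψ0 t s = Real.exp (-2 * γ * (s - t)) *
        ((ζ * Real.exp (2 * γ * T) - Real.exp (2 * γ * s)) /
         (ζ * Real.exp (2 * γ * T) - Real.exp (2 * γ * t))) ^ 2)
    (t s : ℝ) (hts : t ≤ s) (hsT : s ≤ T)
    (hnd : ∀ r ∈ Set.Icc t s, ζ * Real.exp (2 * γ * (T - r)) ≠ 1) :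
    Real.exp (2 * γ * ∫ r in t..s, θ0 r) = Ψ0 t s := by
  set c : ℝ := ζ * Real.exp (2 * γ * T) with hc
  have hD : ∀ r ∈ Set.Icc t s, c - Real.exp (2 * γ * r) ≠ 0 := by
    intro r hr h0
    apply hnd r hr
    have he : Real.exp (2 * γ * (T - r)) * Real.exp (2 * γ * r) = Real.exp (2 * γ * T) := by
      rw [← Real.exp_add]; ring_nf
    have hz : c = Real.exp (2 * γ * r) := by linarith [sub_eq_zero.mp h0]
    have h1 : ζ * Real.exp (2 * γ * (T - r)) * Real.exp (2 * γ * r)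
        = 1 * Real.exp (2 * γ * r) := by
      rw [mul_assoc, he, one_mul]; exact hz
    exact mul_right_cancel₀ (Real.exp_ne_zero _) h1
  -- antiderivative
  set F : ℝ → ℝ := fun r => -r + (1 / γ) * Real.log (c - Real.exp (2 * γ * r)) with hF
  have hderiv : ∀ r ∈ Set.uIcc t s, HasDerivAt F (θ0 r) r := by
    intro r hr
    rw [Set.uIcc_of_le hts] at hr
    have h1 : HasDerivAt (fun r : ℝ => 2 * γ * r) (2 * γ) r := by
      simpa using (hasDerivAt_id r).const_mul (2 * γ)
    have h2 : HasDerivAt (fun r : ℝ => Real.exp (2 * γ * r))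
        (Real.exp (2 * γ * r) * (2 * γ)) r := h1.exp
    have h3 : HasDerivAt (fun r : ℝ => c - Real.exp (2 * γ * r))
        (0 - Real.exp (2 * γ * r) * (2 * γ)) r := (hasDerivAt_const r c).sub h2
    have h4 : HasDerivAt (fun r : ℝ => Real.log (c - Real.exp (2 * γ * r)))
        ((0 - Real.exp (2 * γ * r) * (2 * γ)) / (c - Real.exp (2 * γ * r))) r :=
      h3.log (hD r hr)
    have h5 : HasDerivAt F
        (-1 + (1 / γ) * ((0 - Real.exp (2 * γ * r) * (2 * γ)) / (c - Real.exp (2 * γ * r)))) r := by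
      simpa [hF, one_div, Pi.add_def, Pi.neg_def, id] using (hasDerivAt_id r).neg.add (h4.const_mul (1 / γ))
    convert h5 using 1
    rw [hθ0]
    have he : Real.exp (2 * γ * (T - r)) * Real.exp (2 * γ * r) = Real.exp (2 * γ * T) := by
      rw [← Real.exp_add]; ring_nf
    have hne1 : (1 : ℝ) - ζ * Real.exp (2 * γ * (T - r)) ≠ 0 := by
      intro h; exact hnd r hr (by linarith [sub_eq_zero.mp h])
    have hne2 := hD r hr
    have hγ' : γ ≠ 0 := hγ.ne'
    rw [hc] at hne2 ⊢
    field_simp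
    linear_combination (-2 * γ * ζ) * he
  have hcont : IntervalIntegrable θ0 volume t s := by
    apply ContinuousOn.intervalIntegrable
    rw [Set.uIcc_of_le hts]
    have : ContinuousOn (fun r => (1 + ζ * Real.exp (2 * γ * (T - r))) /
        (1 - ζ * Real.exp (2 * γ * (T - r)))) (Set.Icc t s) := by
      apply ContinuousOn.div
      · fun_prop
      · fun_prop
      · intro r hr h
        exact hnd r hr (by linarith [sub_eq_zero.mp h])
    exact this.congr (fun r _ => hθ0 r)
  have hint : ∫ r in t..s, θ0 r = F s - F t :=
    intervalIntegral.integral_eq_sub_of_hasDerivAt hderiv hcont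
  rw [hint, hΨ0]
  have hDt := hD t (Set.left_mem_Icc.mpr hts)
  have hDs := hD s (Set.right_mem_Icc.mpr hts)
  have hγ' : γ ≠ 0 := hγ.ne'
  have key : 2 * γ * (F s - F t) = (-2 * γ * (s - t)) +
      (2 * Real.log (c - Real.exp (2 * γ * s)) - 2 * Real.log (c - Real.exp (2 * γ * t))) := by
    simp only [hF]; field_simp; ring
  rw [key, Real.exp_add]
  congr 1
  have hexp : ∀ x : ℝ, x ≠ 0 → Real.exp (2 * Real.log x) = x ^ 2 := by
    intro x hx
    rw [two_mul, Real.exp_add, ← Real.log_abs, Real.exp_log (abs_pos.mpr hx), ← abs_mul,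
      abs_of_nonneg (mul_self_nonneg x), sq]
  rw [sub_eq_add_neg, Real.exp_add, Real.exp_neg, hexp _ hDs, hexp _ hDt, div_pow]
  rfl
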